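/- For X ∈ gu(V) with α = α(X) satisfying 1 + α ≠ 0 and 1 + X invertible, the element c(X) = (1 − X/(1+α))(1+X)^{-1} satisfies c(X)·c(X)* = (1+α)^{-2}; in particular c(X) ∈ GU(V) with multiplier μ(c(X)) = (1+α)^{-2}. -/

import Mathlib

/- STATEMENT 4: For X ∈ gu(V) with α = α(X) ∈ F (so τ α = α), 1 + α ≠ 0 and
1 + X invertible, the Cayley image c(X) = (1 − (1+α)⁻¹X)(1+X)⁻¹ satisfies
c(X)·c(X)* = (1+α)⁻², so c(X) ∈ GU(V) with multiplier (1+α)⁻². -/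
theorem similitude_cayley_map_lands_in_GU
    {E V : Type*} [Field E] [AddCommGroup V] [Module E V]
    [FiniteDimensional E V] [Nontrivial V]
    (hchar : (2 : E) ≠ 0)
    (τ : E →+* E) (hτ : ∀ a : E, τ (τ a) = a)
    (ε : E) (hε : ε = 1 ∨ ε = -1)
    (B : V → V → E)
    (haddl : ∀ u v w : V, B (u + v) w = B u w + B v w)
    (hsmull : ∀ (c : E) (v w : V), B (c • v) w = c * B v w)
    (hherm : ∀ v w : V, B v w = ε * τ (B w v))
    (hnd : ∀ v : V, (∀ w : V, B v w = 0) → v = 0)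
    (adj : (V →ₗ[E] V) → (V →ₗ[E] V))
    (hadj : ∀ (a : V →ₗ[E] V) (v w : V), B (a v) w = B v (adj a w))
    (X : V →ₗ[E] V) (α : E) (hατ : τ α = α)
    (hX : X + adj X = α • (1 : V →ₗ[E] V))
    (hα : (1 : E) + α ≠ 0)
    (hXinv : IsUnit ((1 : V →ₗ[E] V) + X)) :
    ((1 - ((1 + α)⁻¹ : E) • X) * Ring.inverse (1 + X)) *
      adj ((1 - ((1 + α)⁻¹ : E) • X) * Ring.inverse (1 + X)) =
      (((1 + α)⁻¹ : E) ^ 2) • (1 : V →ₗ[E] V) := by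
  set β : E := (1 + α)⁻¹ with hβdef
  have hβ : (1 + α) * β = 1 := mul_inv_cancel₀ hα
  have hβ' : β * (1 + α) = 1 := inv_mul_cancel₀ hα
  have hεne : ε ≠ 0 := by rcases hε with h | h <;> simp [h]
  -- second-slot linearity
  have hB2add : ∀ v u u' : V, B v (u + u') = B v u + B v u' := by
    intro v u u'
    rw [hherm, haddl, map_add, mul_add, ← hherm, ← hherm]
  have hB2smul : ∀ (c : E) (v u : V), B v (c • u) = τ c * B v u := by
    intro c v u
    rw [hherm, hsmull, map_mul, hherm v u]
    ring
  have hnd2 : ∀ u : V, (∀ v : V, B v u = 0) → u = 0 := by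
    intro u h
    apply hnd
    intro v
    have h1 := h v
    rw [hherm] at h1
    have h2 : τ (B u v) = 0 := by
      rcases mul_eq_zero.1 h1 with h | h
      · exact absurd h hεne
      · exact h
    exact (map_eq_zero_iff τ (RingHom.injective τ)).1 h2
  -- extensionality via the form
  have hext : ∀ f g : V →ₗ[E] V, (∀ v w : V, B v (f w) = B v (g w)) → f = g := by
    intro f g h
    ext w
    have hz : ∀ v : V, B v (f w - g w) = 0 := by
      intro v
      have hneg : B v (-(g w)) = -B v (g w) := by
        rw [← neg_one_smul E (g w), hB2smul, map_neg, map_one, neg_one_mul]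
      rw [sub_eq_add_neg, hB2add, hneg, h v w, add_neg_cancel]
    exact sub_eq_zero.1 (hnd2 _ hz)
  have adj_eq : ∀ (a f : V →ₗ[E] V), (∀ v w : V, B (a v) w = B v (f w)) → adj a = f := by
    intro a f h
    exact hext _ _ fun v w => by rw [← hadj, h]
  have adj_one : adj 1 = 1 := adj_eq 1 1 (fun v w => rfl)
  have adj_mul : ∀ a b : V →ₗ[E] V, adj (a * b) = adj b * adj a := by
    intro a b
    apply adj_eq
    intro v w
    rw [Module.End.mul_apply, hadj, hadj, Module.End.mul_apply]
  have adj_add : ∀ a b : V →ₗ[E] V, adj (a + b) = adj a + adj b := by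
    intro a b
    apply adj_eq
    intro v w
    rw [LinearMap.add_apply, haddl, hadj, hadj, LinearMap.add_apply, hB2add]
  have adj_smul : ∀ (c : E) (a : V →ₗ[E] V), adj (c • a) = τ c • adj a := by
    intro c a
    apply adj_eq
    intro v w
    rw [LinearMap.smul_apply, hsmull, hadj, LinearMap.smul_apply, hB2smul, hτ]
  have adj_sub : ∀ a b : V →ₗ[E] V, adj (a - b) = adj a - adj b := by
    intro a b
    rw [sub_eq_add_neg, ← neg_one_smul E b, adj_add, adj_smul, map_neg, map_one,
      neg_one_smul, ← sub_eq_add_neg]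
  have adjX : adj X = α • (1 : V →ₗ[E] V) - X := eq_sub_of_add_eq' hX
  have τβ : τ β = β := by rw [hβdef, map_inv₀, map_add, map_one, hατ]
  set P : V →ₗ[E] V := 1 + X with hP
  set Q : V →ₗ[E] V := 1 - β • X with hQ
  set W : V →ₗ[E] V := Ring.inverse P with hW
  have hPW : P * W = 1 := Ring.mul_inverse_cancel P hXinv
  have hWP : W * P = 1 := Ring.inverse_mul_cancel P hXinv
  have adjP : adj P = (1 + α) • Q := by
    rw [hP, hQ, adj_add, adj_one, adjX, smul_sub, smul_smul, hβ, one_smul, add_smul, one_smul]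
    abel
  have adjQ : adj Q = β • P := by
    rw [hQ, hP, adj_sub, adj_one, adj_smul, τβ, adjX]
    match_scalars
    · rw [hβdef]; field_simp; ring
    · rw [hβdef]; field_simp
  have hadjWP : adj W * adj P = 1 := by rw [← adj_mul, hPW, adj_one]
  have hadjPW : adj P * adj W = 1 := by rw [← adj_mul, hWP, adj_one]
  rw [adjP, smul_mul_assoc] at hadjPW
  have hQZ : Q * ((1 + α) • adj W) = 1 := by
    rw [mul_smul_comm]; exact hadjPW
  have hadjW : adj W = β • ((1 + α) • adj W) := by
    rw [smul_smul, hβ', one_smul]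
  have hPQc : P * Q = Q * P := by
    have : Commute P Q := by
      rw [hP, hQ]
      exact (Commute.one_left _).add_left
        (((Commute.one_right X).sub_right ((Commute.refl X).smul_right β)))
    exact this.eq
  have hQW : Q * W = W * Q := by
    calc Q * W = W * P * Q * W := by rw [hWP, one_mul]
      _ = W * (P * Q) * W := by rw [mul_assoc W P Q]
      _ = W * (Q * P) * W := by rw [hPQc]
      _ = W * Q * (P * W) := by rw [← mul_assoc W Q P, mul_assoc (W * Q) P W]
      _ = W * Q := by rw [hPW, mul_one]
  rw [adj_mul, adjQ, hadjW, smul_mul_assoc, mul_smul_comm,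
    mul_smul_comm β ((1 + α) • adj W) P,
    mul_smul_comm β (Q * W) (((1 + α) • adj W) * P), smul_smul]
  have hone : Q * W * (((1 + α) • adj W) * P) = 1 := by
    rw [hQW, mul_assoc W Q (((1 + α) • adj W) * P), ← mul_assoc Q ((1 + α) • adj W) P,
      hQZ, one_mul, hWP]
  rw [hone, sq]
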